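/- For every cycle C_n with n ≥ 4, the domination polynomial satisfies D(C_n, x) = x·(D(C_{n-1}, x) + D(C_{n-2}, x) + D(C_{n-3}, x)). -/

import Mathlib

open Polynomial SimpleGraph

/-- `S` is a dominating set of `G`: every vertex is in `S` or adjacent to a vertex of `S`. -/
def IsDomSet {V : Type*} (G : SimpleGraph V) (S : Finset V) : Prop :=
  ∀ v : V, v ∈ S ∨ ∃ u ∈ S, G.Adj u v

/-- The domination polynomial `D(G,x) = ∑ d(G,i) xⁱ`. -/
noncomputable def domPoly {V : Type*} [Fintype V] (G : SimpleGraph V) : Polynomial ℤ :=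
  ∑ i ∈ Finset.range (Fintype.card V + 1),
    (Nat.card {S : Finset V // IsDomSet G S ∧ S.card = i} : ℤ) • (X : Polynomial ℤ) ^ i

open Finset


/-- Cyclic window-domination condition on ℕ-finsets. -/
def DomN (n : ℕ) (S : Finset ℕ) : Prop :=
  S ⊆ Finset.range n ∧ ∀ v < n, v ∈ S ∨ (v + 1) % n ∈ S ∨ (v + 2) % n ∈ S

lemma DomN.nonempty {n : ℕ} {S : Finset ℕ} (h : DomN n S) (hn : 1 ≤ n) : S.Nonempty := by
  rcases h.2 0 hn with h0 | h0 | h0 <;> exact ⟨_, h0⟩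

lemma DomN.min_le_two {n : ℕ} {S : Finset ℕ} (h : DomN n S) (hn : 1 ≤ n)
    (hne : S.Nonempty) : S.min' hne ≤ 2 := by
  rcases h.2 0 hn with h0 | h0 | h0 <;>
    refine le_trans (Finset.min'_le _ _ h0) ?_
  · exact Nat.zero_le 2
  · exact le_trans (Nat.mod_le _ _) (by norm_num)
  · exact le_trans (Nat.mod_le _ _) (by norm_num)

lemma DomN.mem_lt {n : ℕ} {S : Finset ℕ} (h : DomN n S) {s : ℕ} (hs : s ∈ S) : s < n :=
  Finset.mem_range.mp (h.1 hs)

section Forward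
variable {n k : ℕ} {S : Finset ℕ} (hne : S.Nonempty)

/-- elements other than the min are at least `min + k`, given no elements strictly between. -/
lemma struct_lemma (hgap : ∀ j, 0 < j → j < k → S.min' hne + j ∉ S)
    {s : ℕ} (hs : s ∈ S) : s = S.min' hne ∨ S.min' hne + k ≤ s := by
  set a := S.min' hne with ha
  rcases eq_or_lt_of_le (Finset.min'_le _ _ hs) with h | h
  · exact Or.inl h.symm
  · right
    by_contra hlt
    push_neg at hlt
    exact hgap (s - a) (by omega) (by omega) (by rwa [Nat.add_sub_of_le h.le])

/-- the second smallest element is within distance 3 of the min. -/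
lemma gap_exists (hS : DomN n S) (hn : 4 ≤ n) (hcard : 2 ≤ S.card) :
    S.min' hne + 1 ∈ S ∨ S.min' hne + 2 ∈ S ∨ S.min' hne + 3 ∈ S := by
  set a := S.min' hne with ha
  -- there is another element b > a
  obtain ⟨b, hb, hba⟩ : ∃ b ∈ S, a < b := by
    obtain ⟨b, hb, hba⟩ := Finset.exists_mem_ne hcard a
    exact ⟨b, hb, lt_of_le_of_ne (Finset.min'_le _ _ hb) (Ne.symm hba)⟩
  have hbn : b < n := hS.mem_lt hb
  have han : a + 1 < n := by omega
  have key : ∀ j : ℕ, 1 ≤ j → j ≤ 3 → (a + j) % n ∈ S → a + j ∈ S := by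
    intro j h1 h3 hj
    rcases lt_or_ge (a + j) n with h | h
    · rwa [Nat.mod_eq_of_lt h] at hj
    · exfalso
      have : (a + j) % n = a + j - n := by
        rw [Nat.mod_eq_sub_mod (by omega), Nat.mod_eq_of_lt (by omega)]
      rw [this] at hj
      have := Finset.min'_le _ _ hj
      omega
  rcases hS.2 (a + 1) han with h | h | h
  · exact Or.inl h
  · exact Or.inr (Or.inl (key 2 (by norm_num) (by norm_num) (by rwa [show a+1+1 = a+2 by ring] at h)))
  · exact Or.inr (Or.inr (key 3 (by norm_num) (by norm_num) (by rwa [show a+1+2 = a+3 by ring] at h)))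

/-- Membership in the shrunken set. -/
lemma memT (hk1 : 1 ≤ k) (hgap : ∀ j, 0 < j → j < k → S.min' hne + j ∉ S) (t : ℕ) :
    t ∈ (S.erase (S.min' hne)).image (· - k) ↔ t + k ∈ S ∧ S.min' hne ≤ t := by
  set a := S.min' hne with ha
  simp only [Finset.mem_image, Finset.mem_erase]
  constructor
  · rintro ⟨s, ⟨hsa, hs⟩, rfl⟩
    rcases struct_lemma hne hgap hs with h | h
    · exact absurd h hsa
    · constructor
      · rwa [Nat.sub_add_cancel (by omega)]
      · omega
  · rintro ⟨hts, hat⟩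
    exact ⟨t + k, ⟨by omega, hts⟩, by omega⟩

lemma cardT (hk1 : 1 ≤ k) (hgap : ∀ j, 0 < j → j < k → S.min' hne + j ∉ S) :
    ((S.erase (S.min' hne)).image (· - k)).card = S.card - 1 := by
  rw [Finset.card_image_of_injOn, Finset.card_erase_of_mem (Finset.min'_mem _ _)]
  intro x hx y hy hxy
  have hx' := (struct_lemma hne hgap (Finset.mem_of_mem_erase hx)).resolve_left
    (Finset.ne_of_mem_erase hx)
  have hy' := (struct_lemma hne hgap (Finset.mem_of_mem_erase hy)).resolve_left
    (Finset.ne_of_mem_erase hy)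
  simp only at hxy
  omega

lemma minT_mem (hk1 : 1 ≤ k) (hmem : S.min' hne + k ∈ S)
    (hgap : ∀ j, 0 < j → j < k → S.min' hne + j ∉ S) :
    S.min' hne ∈ (S.erase (S.min' hne)).image (· - k) := by
  rw [memT hne hk1 hgap]
  exact ⟨hmem, le_refl _⟩

lemma minT (hk1 : 1 ≤ k) (hmem : S.min' hne + k ∈ S)
    (hgap : ∀ j, 0 < j → j < k → S.min' hne + j ∉ S)
    (hT : ((S.erase (S.min' hne)).image (· - k)).Nonempty) :
    ((S.erase (S.min' hne)).image (· - k)).min' hT = S.min' hne := by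
  apply le_antisymm
  · exact Finset.min'_le _ _ (minT_mem hne hk1 hmem hgap)
  · apply Finset.le_min'
    intro t ht
    exact ((memT hne hk1 hgap t).mp ht).2

/-- Forward direction: the shrunken set window-dominates the smaller cycle. -/
lemma forward (hS : DomN n S) (hn : 4 ≤ n) (hk1 : 1 ≤ k) (hk3 : k ≤ 3)
    (hmem : S.min' hne + k ∈ S) (hgap : ∀ j, 0 < j → j < k → S.min' hne + j ∉ S) :
    DomN (n - k) ((S.erase (S.min' hne)).image (· - k)) := by
  set a := S.min' hne with ha
  set T := (S.erase a).image (· - k) with hT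
  set m := n - k with hm
  have hTsub : T ⊆ Finset.range m := by
    intro t ht
    rw [hT, memT hne hk1 hgap] at ht
    have := hS.mem_lt ht.1
    rw [Finset.mem_range]; omega
  have ha2 : a ≤ 2 := hS.min_le_two (by omega) hne
  have ham : a < m := by
    have := hS.mem_lt hmem
    omega
  have haT : a ∈ T := minT_mem hne hk1 hmem hgap
  refine ⟨hTsub, ?_⟩
  intro v hv
  rcases lt_or_ge v a with hva | hva
  · -- v < a ≤ 2 : the window contains a
    have h1 : a = v + 1 ∨ a = v + 2 := by omega
    rcases h1 with h | h
    · refine Or.inr (Or.inl ?_)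
      rwa [← h, Nat.mod_eq_of_lt ham]
    · refine Or.inr (Or.inr ?_)
      rwa [← h, Nat.mod_eq_of_lt ham]
  · -- a ≤ v : use the window of S at v + k
    have hvk : v + k < n := by omega
    have key : ∀ j : ℕ, j ≤ 2 → (v + k + j) % n ∈ S → ∃ j' ≤ j, (v + j') % m ∈ T := by
      intro j hj hw
      rcases lt_or_ge (v + k + j) n with hlt | hge
      · rw [Nat.mod_eq_of_lt hlt] at hw
        have h1 : v + j ∈ T := by
          rw [hT, memT hne hk1 hgap]
          exact ⟨by rwa [show v + j + k = v + k + j by ring], by omega⟩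
        exact ⟨j, le_refl _, by rwa [Nat.mod_eq_of_lt (by omega)]⟩
      · have hwv : (v + k + j) % n = v + k + j - n := by
          rw [Nat.mod_eq_sub_mod hge, Nat.mod_eq_of_lt (by omega)]
        rw [hwv] at hw
        have hsmall : v + k + j - n ≤ j - 1 := by omega
        rcases struct_lemma hne hgap hw with h | h
        · -- wrapped element is a itself
          refine ⟨j, le_refl _, ?_⟩
          have hvj : v + j = m + a := by omega
          rw [hvj, Nat.add_mod_left, Nat.mod_eq_of_lt ham]
          exact haT
        · -- wrapped element ≥ a + k forces a = 0, k = 1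
          have ha0 : a = 0 ∧ k = 1 ∧ v + k + j - n = 1 := by omega
          refine ⟨j - 1, by omega, ?_⟩
          have hvj : v + (j - 1) = m := by omega
          rw [hvj, Nat.mod_self, ← ha0.1]
          exact haT
    have main : ∃ j' ≤ 2, (v + j') % m ∈ T := by
      rcases hS.2 (v + k) hvk with h | h | h
      · obtain ⟨j', hj', hh⟩ := key 0 (by norm_num) (by rwa [Nat.add_zero, Nat.mod_eq_of_lt hvk])
        exact ⟨j', by omega, hh⟩
      · obtain ⟨j', hj', hh⟩ := key 1 (by norm_num) h
        exact ⟨j', by omega, hh⟩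
      · exact key 2 (by norm_num) h
    obtain ⟨j', hj', hh⟩ := main
    interval_cases j'
    · exact Or.inl (by rwa [Nat.add_zero, Nat.mod_eq_of_lt hv] at hh)
    · exact Or.inr (Or.inl hh)
    · exact Or.inr (Or.inr hh)

end Forward

section Backward
variable {m k : ℕ} {T : Finset ℕ} (hTne : T.Nonempty)

lemma memS (s : ℕ) :
    s ∈ insert (T.min' hTne) (T.image (· + k)) ↔
      s = T.min' hTne ∨ ∃ t ∈ T, s = t + k := by
  simp only [Finset.mem_insert, Finset.mem_image]
  constructor
  · rintro (h | ⟨t, ht, rfl⟩)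
    · exact Or.inl h
    · exact Or.inr ⟨t, ht, rfl⟩
  · rintro (h | ⟨t, ht, rfl⟩)
    · exact Or.inl h
    · exact Or.inr ⟨t, ht, rfl⟩

lemma cardS (hk1 : 1 ≤ k) :
    (insert (T.min' hTne) (T.image (· + k))).card = T.card + 1 := by
  rw [Finset.card_insert_of_notMem, Finset.card_image_of_injective _ (add_left_injective k)]
  simp only [Finset.mem_image, not_exists]
  rintro t ⟨ht, hteq⟩
  have := Finset.min'_le _ _ ht
  omega

lemma minS (hk1 : 1 ≤ k) :
    ∀ s ∈ insert (T.min' hTne) (T.image (· + k)), T.min' hTne ≤ s := by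
  intro s hs
  rw [memS hTne] at hs
  rcases hs with rfl | ⟨t, ht, rfl⟩
  · exact le_refl _
  · have := Finset.min'_le _ _ ht
    omega

lemma minS' (hk1 : 1 ≤ k)
    (hne' : (insert (T.min' hTne) (T.image (· + k))).Nonempty) :
    (insert (T.min' hTne) (T.image (· + k))).min' hne' = T.min' hTne := by
  apply le_antisymm
  · exact Finset.min'_le _ _ (Finset.mem_insert_self _ _)
  · exact Finset.le_min' _ _ _ (minS hTne hk1)

lemma gapS (hk1 : 1 ≤ k) :
    ∀ j, 0 < j → j < k → T.min' hTne + j ∉ insert (T.min' hTne) (T.image (· + k)) := by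
  intro j hj0 hjk hmem
  rw [memS hTne] at hmem
  rcases hmem with h | ⟨t, ht, h⟩
  · omega
  · have := Finset.min'_le _ _ ht
    omega

lemma memSk (hk1 : 1 ≤ k) :
    T.min' hTne + k ∈ insert (T.min' hTne) (T.image (· + k)) := by
  rw [memS hTne]
  exact Or.inr ⟨_, Finset.min'_mem _ _, rfl⟩

/-- Backward direction: the grown set window-dominates the bigger cycle. -/
lemma backward (hT : DomN m T) (hm : 1 ≤ m) (hk1 : 1 ≤ k) (hk3 : k ≤ 3) :
    DomN (m + k) (insert (T.min' hTne) (T.image (· + k))) := by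
  set a := T.min' hTne with ha
  set S := insert a (T.image (· + k)) with hS
  set n := m + k with hn
  have ha2 : a ≤ 2 := hT.min_le_two hm hTne
  have ham : a < m := hT.mem_lt (Finset.min'_mem _ _)
  have haS : a ∈ S := Finset.mem_insert_self _ _
  have hSsub : S ⊆ Finset.range n := by
    intro s hs
    rw [hS, memS hTne] at hs
    rw [Finset.mem_range]
    rcases hs with rfl | ⟨t, ht, rfl⟩
    · omega
    · have := hT.mem_lt ht
      omega
  refine ⟨hSsub, ?_⟩
  intro v hv
  rcases lt_or_ge v a with hva | hva
  · -- v < a : window contains a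
    have h1 : a = v + 1 ∨ a = v + 2 := by omega
    rcases h1 with h | h
    · exact Or.inr (Or.inl (by rwa [← h, Nat.mod_eq_of_lt (by omega)]))
    · exact Or.inr (Or.inr (by rwa [← h, Nat.mod_eq_of_lt (by omega)]))
  rcases lt_or_ge v (a + k) with hvak | hvak
  · -- a ≤ v < a + k : window contains a or a + k
    rcases eq_or_lt_of_le hva with rfl | hva'
    · exact Or.inl haS
    · have hak : a + k ∈ S := memSk hTne hk1
      have h1 : a + k = v + 1 ∨ a + k = v + 2 := by omega
      have hakn : a + k < n := by omega
      rcases h1 with h | h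
      · exact Or.inr (Or.inl (by rwa [← h, Nat.mod_eq_of_lt hakn]))
      · exact Or.inr (Or.inr (by rwa [← h, Nat.mod_eq_of_lt hakn]))
  -- a + k ≤ v
  rcases lt_or_ge (v + 2) n with hv2 | hv2
  · -- no wrap : use T-window at v - k
    obtain ⟨j, hj, ht⟩ : ∃ j ≤ 2, (v - k + j) % m ∈ T := by
      rcases hT.2 (v - k) (by omega) with h | h | h
      · exact ⟨0, by norm_num, by rwa [Nat.add_zero, Nat.mod_eq_of_lt (by omega)]⟩
      · exact ⟨1, by norm_num, h⟩
      · exact ⟨2, by norm_num, h⟩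
    have hnw : v - k + j < m := by
      by_contra hge
      push_neg at hge
      omega
    rw [Nat.mod_eq_of_lt hnw] at ht
    have hvS : v + j ∈ S := by
      rw [hS, memS hTne]
      exact Or.inr ⟨v - k + j, ht, by omega⟩
    interval_cases j
    · exact Or.inl (by simpa using hvS)
    · exact Or.inr (Or.inl (by rwa [Nat.mod_eq_of_lt (by omega)]))
    · exact Or.inr (Or.inr (by rwa [Nat.mod_eq_of_lt (by omega)]))
  -- wrap cases : v = n - 2 or v = n - 1
  · rcases lt_or_ge m 2 with hm1 | hm2
    · -- m = 1 : T = {a} = {0}... a = 0 ∈ S and 0 is in the window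
      have ha0 : a = 0 := by omega
      have h1 : (v + 1) % n = 0 ∨ (v + 2) % n = 0 := by
        rcases (by omega : v = n - 1 ∨ v = n - 2) with rfl | rfl
        · left
          rw [Nat.sub_add_cancel (by omega), Nat.mod_self]
        · right
          rw [show n - 2 + 2 = n by omega, Nat.mod_self]
      rcases h1 with h | h
      · exact Or.inr (Or.inl (by rw [h, ← ha0]; exact haS))
      · exact Or.inr (Or.inr (by rw [h, ← ha0]; exact haS))
    · -- m ≥ 2
      rcases (by omega : v = n - 2 ∨ v = n - 1) with rfl | rfl
      · -- window is {n-2, n-1, 0}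
        rcases hT.2 (m - 2) (by omega) with h | h | h
        · -- m - 2 ∈ T hence n - 2 ∈ S
          refine Or.inl ?_
          rw [hS, memS hTne]
          exact Or.inr ⟨m - 2, h, by omega⟩
        · -- m - 1 ∈ T hence n - 1 ∈ S
          rw [show m - 2 + 1 = m - 1 by omega, Nat.mod_eq_of_lt (by omega)] at h
          refine Or.inr (Or.inl ?_)
          rw [show n - 2 + 1 = n - 1 by omega, Nat.mod_eq_of_lt (by omega), hS, memS hTne]
          exact Or.inr ⟨m - 1, h, by omega⟩
        · -- 0 ∈ T hence a = 0 ∈ S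
          rw [show m - 2 + 2 = m by omega, Nat.mod_self] at h
          have ha0 : a = 0 := le_antisymm (Finset.min'_le _ _ h) (Nat.zero_le _)
          refine Or.inr (Or.inr ?_)
          rw [show n - 2 + 2 = n by omega, Nat.mod_self, ← ha0]
          exact haS
      · -- window is {n-1, 0, 1}
        rcases hT.2 (m - 1) (by omega) with h | h | h
        · refine Or.inl ?_
          rw [hS, memS hTne]
          exact Or.inr ⟨m - 1, h, by omega⟩
        · -- (m-1+1) % m = 0 ∈ T : a = 0
          rw [Nat.sub_add_cancel (by omega), Nat.mod_self] at h
          have ha0 : a = 0 := le_antisymm (Finset.min'_le _ _ h) (Nat.zero_le _)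
          refine Or.inr (Or.inl ?_)
          rw [Nat.sub_add_cancel (by omega), Nat.mod_self, ← ha0]
          exact haS
        · -- (m-1+2) % m = 1 ∈ T : so a ≤ 1
          rw [show m - 1 + 2 = m + 1 by omega, Nat.add_mod_left, Nat.mod_eq_of_lt hm2] at h
          have ha1 : a ≤ 1 := Finset.min'_le _ _ h
          have h12 : (n - 1 + 2) % n = 1 := by
            rw [show n - 1 + 2 = n + 1 by omega, Nat.add_mod_left, Nat.mod_eq_of_lt (by omega)]
          have h01 : (n - 1 + 1) % n = 0 := by
            rw [Nat.sub_add_cancel (by omega), Nat.mod_self]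
          rcases (by omega : a = 0 ∨ a = 1) with ha0 | ha0
          · exact Or.inr (Or.inl (by rw [h01, ← ha0]; exact haS))
          · refine Or.inr (Or.inr ?_)
            rw [h12, ← ha0]
            exact haS

end Backward

section Transfer

lemma isDomSet_cycle_iff {n : ℕ} (S : Finset (Fin (n+1))) :
    IsDomSet (cycleGraph (n+1)) S ↔ ∀ v : Fin (n+1), v ∈ S ∨ v + 1 ∈ S ∨ v + 1 + 1 ∈ S := by
  rcases n with _ | m
  · -- n = 1
    have e : ∀ a b : Fin (0+1), a = b := fun a b => Fin.ext (by omega)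
    constructor
    · intro h v
      rcases h v with hv | ⟨u, hu, hadj⟩
      · exact Or.inl hv
      · exact absurd hadj cycleGraph_one_adj
    · intro h v
      rcases h v with hv | hv | hv
      · exact Or.inl hv
      · exact Or.inl (by rwa [e (v+1) v] at hv)
      · exact Or.inl (by rwa [e (v+1+1) v] at hv)
  · -- n = m + 2
    have adj_iff : ∀ u v : Fin (m+2), (cycleGraph (m+2)).Adj u v ↔ u = v + 1 ∨ v = u + 1 := by
      intro u v
      rw [cycleGraph_adj, sub_eq_iff_eq_add', sub_eq_iff_eq_add']
    constructor
    · intro h v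
      rcases h (v + 1) with hv | ⟨u, hu, hadj⟩
      · exact Or.inr (Or.inl hv)
      · rw [adj_iff] at hadj
        rcases hadj with rfl | h'
        · exact Or.inr (Or.inr hu)
        · have huv : u = v := add_right_cancel h'.symm
          exact Or.inl (huv ▸ hu)
    · intro h v
      rcases h (v - 1) with hv | hv | hv
      · refine Or.inr ⟨v - 1, hv, ?_⟩
        rw [adj_iff]
        exact Or.inr (by rw [sub_add_cancel])
      · exact Or.inl (by rwa [sub_add_cancel] at hv)
      · refine Or.inr ⟨v - 1 + 1 + 1, hv, ?_⟩
        rw [adj_iff]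
        exact Or.inl (by rw [sub_add_cancel])

lemma val_add_one {n : ℕ} (v : Fin (n+1)) : (v + 1).val = (v.val + 1) % (n+1) := by
  rw [Fin.add_def, Fin.val_one']
  simp [Nat.add_mod_mod]

lemma domN_map {n : ℕ} (S : Finset (Fin (n+1))) :
    DomN (n+1) (S.map Fin.valEmbedding) ↔ IsDomSet (cycleGraph (n+1)) S := by
  rw [isDomSet_cycle_iff]
  have hmem : ∀ w : ℕ, ∀ hw : w < n + 1,
      (w ∈ S.map Fin.valEmbedding ↔ (⟨w, hw⟩ : Fin (n+1)) ∈ S) := by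
    intro w hw
    simp only [Finset.mem_map, Fin.valEmbedding_apply]
    constructor
    · rintro ⟨u, hu, rfl⟩
      convert hu
    · intro h
      exact ⟨_, h, rfl⟩
  have hval : ∀ v : Fin (n+1), (v + 1).val = (v.val + 1) % (n+1) := val_add_one
  constructor
  · intro ⟨hsub, h⟩ v
    rcases h v.val v.isLt with hv | hv | hv
    · exact Or.inl (by rwa [hmem _ v.isLt, Fin.eta] at hv)
    · refine Or.inr (Or.inl ?_)
      rw [← hval] at hv
      rwa [hmem _ (v+1).isLt, Fin.eta] at hv
    · refine Or.inr (Or.inr ?_)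
      have : (v.val + 2) % (n+1) = (v + 1 + 1).val := by
        rw [hval (v+1), hval v, Nat.mod_add_mod, show v.val + 1 + 1 = v.val + 2 by ring]
      rw [this] at hv
      rwa [hmem _ (v+1+1).isLt, Fin.eta] at hv
  · intro h
    constructor
    · intro w hw
      simp only [Finset.mem_map, Fin.valEmbedding_apply] at hw
      obtain ⟨u, _, rfl⟩ := hw
      exact Finset.mem_range.mpr u.isLt
    · intro v hv
      rcases h ⟨v, hv⟩ with h' | h' | h'
      · exact Or.inl ((hmem v hv).mpr h')
      · refine Or.inr (Or.inl ?_)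
        have hlt : (v+1) % (n+1) < n+1 := Nat.mod_lt _ (by omega)
        rw [hmem _ hlt]
        have he : (⟨(v+1)%(n+1), hlt⟩ : Fin (n+1)) = ⟨v, hv⟩ + 1 := by
          rw [Fin.ext_iff]
          exact (hval ⟨v,hv⟩).symm
        rw [he]
        exact h'
      · refine Or.inr (Or.inr ?_)
        have hlt : (v+2) % (n+1) < n+1 := Nat.mod_lt _ (by omega)
        rw [hmem _ hlt]
        have he : (⟨(v+2)%(n+1), hlt⟩ : Fin (n+1)) = ⟨v, hv⟩ + 1 + 1 := by
          rw [Fin.ext_iff]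
          show (v+2) % (n+1) = ((⟨v, hv⟩ : Fin (n+1)) + 1 + 1).val
          rw [hval (⟨v,hv⟩ + 1), hval ⟨v,hv⟩, Nat.mod_add_mod,
            show (v + 1 + 1) = v + 2 by ring]
        rw [he]
        exact h' 

end Transfer

section Inverses
variable {n k : ℕ} {S T : Finset ℕ}

lemma image_shrink_grow (hne : S.Nonempty) (hk1 : 1 ≤ k)
    (hgap : ∀ j, 0 < j → j < k → S.min' hne + j ∉ S) :
    (((S.erase (S.min' hne)).image (· - k)).image (· + k)) = S.erase (S.min' hne) := by
  set a := S.min' hne with ha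
  ext x
  constructor
  · intro hx
    obtain ⟨t, ht, rfl⟩ := Finset.mem_image.mp hx
    have h := (memT hne hk1 hgap t).mp ht
    exact Finset.mem_erase.mpr ⟨by omega, h.1⟩
  · intro hx
    rw [Finset.mem_erase] at hx
    rcases struct_lemma hne hgap hx.2 with h | h
    · exact absurd h hx.1
    · refine Finset.mem_image.mpr ⟨x - k, ?_, by omega⟩
      rw [memT hne hk1 hgap]
      constructor
      · rw [Nat.sub_add_cancel (by omega)]
        exact hx.2
      · omega

lemma bwd_fwd (hne : S.Nonempty) (hk1 : 1 ≤ k) (hmem : S.min' hne + k ∈ S)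
    (hgap : ∀ j, 0 < j → j < k → S.min' hne + j ∉ S)
    (hTne : ((S.erase (S.min' hne)).image (· - k)).Nonempty) :
    insert (((S.erase (S.min' hne)).image (· - k)).min' hTne)
      (((S.erase (S.min' hne)).image (· - k)).image (· + k)) = S := by
  rw [minT hne hk1 hmem hgap, image_shrink_grow hne hk1 hgap,
    Finset.insert_erase (Finset.min'_mem _ _)]

lemma notMemS (hTne : T.Nonempty) (hk1 : 1 ≤ k) :
    T.min' hTne ∉ T.image (· + k) := by
  simp only [Finset.mem_image, not_exists]
  rintro t ⟨ht, hteq⟩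
  have := Finset.min'_le _ _ ht
  omega

lemma fwd_bwd (hTne : T.Nonempty) (hk1 : 1 ≤ k)
    (hSne : (insert (T.min' hTne) (T.image (· + k))).Nonempty) :
    ((insert (T.min' hTne) (T.image (· + k))).erase
      ((insert (T.min' hTne) (T.image (· + k))).min' hSne)).image (· - k) = T := by
  rw [minS' hTne hk1, Finset.erase_insert (notMemS hTne hk1), Finset.image_image]
  have : ((· - k) ∘ (· + k)) = (id : ℕ → ℕ) := by
    funext t
    simp
  rw [this, Finset.image_id]

end Inverses

/-- Dominating "sets" of the `n`-cycle with given cardinality, as ℕ-finsets. -/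
abbrev DS (n i : ℕ) : Type := {S : Finset ℕ // DomN n S ∧ S.card = i}

section EquivPart
variable (n j : ℕ)

def fwdMap (hn : 4 ≤ n) (S : Finset ℕ) (hS : DomN n S) (hcard : S.card = j + 2) :
    DS (n-1) (j+1) ⊕ (DS (n-2) (j+1) ⊕ DS (n-3) (j+1)) :=
  have hne : S.Nonempty := Finset.card_pos.mp (by rw [hcard]; omega)
  if h1 : S.min' hne + 1 ∈ S then
    Sum.inl ⟨(S.erase (S.min' hne)).image (· - 1),
      forward hne hS hn le_rfl (by norm_num) h1 (fun i hi1 hi2 => absurd hi2 (by omega)),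
      by rw [cardT hne le_rfl (fun i hi1 hi2 => absurd hi2 (by omega))]; omega⟩
  else if h2 : S.min' hne + 2 ∈ S then
    Sum.inr (Sum.inl ⟨(S.erase (S.min' hne)).image (· - 2),
      forward hne hS hn (by norm_num) (by norm_num) h2
        (fun i hi1 hi2 => by interval_cases i; exact h1),
      by rw [cardT hne (by norm_num)
        (fun i hi1 hi2 => by interval_cases i; exact h1)]; omega⟩)
  else
    Sum.inr (Sum.inr ⟨(S.erase (S.min' hne)).image (· - 3),
      forward hne hS hn (by norm_num) (by norm_num)
        (((gap_exists hne hS hn (by omega)).resolve_left h1).resolve_left h2)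
        (fun i hi1 hi2 => by
          interval_cases i
          · exact h1
          · exact h2),
      by rw [cardT hne (by norm_num) (fun i hi1 hi2 => by
          interval_cases i
          · exact h1
          · exact h2)]; omega⟩)

def bwdMapOne (hn : 4 ≤ n) (k : ℕ) (hk1 : 1 ≤ k) (hk3 : k ≤ 3)
    (T : Finset ℕ) (hT : DomN (n - k) T) (hcard : T.card = j + 1) : DS n (j+2) :=
  have hne : T.Nonempty := Finset.card_pos.mp (by rw [hcard]; omega)
  ⟨insert (T.min' hne) (T.image (· + k)),
    by
      have h := backward hne hT (by omega) hk1 hk3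
      rwa [Nat.sub_add_cancel (by omega)] at h,
    by rw [cardS hne hk1]; omega⟩

def cycleEquivN (hn : 4 ≤ n) :
    DS n (j+2) ≃ (DS (n-1) (j+1) ⊕ (DS (n-2) (j+1) ⊕ DS (n-3) (j+1))) where
  toFun x := fwdMap n j hn x.1 x.2.1 x.2.2
  invFun y :=
    Sum.elim (fun z => bwdMapOne n j hn 1 le_rfl (by norm_num) z.1 z.2.1 z.2.2)
      (Sum.elim (fun z => bwdMapOne n j hn 2 (by norm_num) (by norm_num) z.1 z.2.1 z.2.2)
        (fun z => bwdMapOne n j hn 3 (by norm_num) (by norm_num) z.1 z.2.1 z.2.2)) y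
  left_inv := by
    rintro ⟨S, hS, hcard⟩
    have hne : S.Nonempty := Finset.card_pos.mp (by rw [hcard]; omega)
    unfold fwdMap
    dsimp only
    split_ifs with h1 h2
    · simp only [Sum.elim_inl]
      unfold bwdMapOne
      exact Subtype.ext (bwd_fwd hne le_rfl h1 (fun i hi1 hi2 => absurd hi2 (by omega)) _)
    · simp only [Sum.elim_inr, Sum.elim_inl]
      unfold bwdMapOne
      exact Subtype.ext (bwd_fwd hne (by norm_num) h2
        (fun i hi1 hi2 => by interval_cases i; exact h1) _)
    · simp only [Sum.elim_inr]
      unfold bwdMapOne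
      exact Subtype.ext (bwd_fwd hne (by norm_num)
        (((gap_exists hne hS hn (by omega)).resolve_left h1).resolve_left h2)
        (fun i hi1 hi2 => by
          interval_cases i
          · exact h1
          · exact h2) _)
  right_inv := by
    rintro (⟨T, hT, hcT⟩ | ⟨T, hT, hcT⟩ | ⟨T, hT, hcT⟩)
    · have hTne : T.Nonempty := Finset.card_pos.mp (by rw [hcT]; omega)
      simp only [Sum.elim_inl]
      unfold bwdMapOne fwdMap
      dsimp only
      split_ifs with h1 h2
      · exact congrArg Sum.inl (Subtype.ext (fwd_bwd hTne le_rfl _))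
      · exfalso
        rw [minS' hTne le_rfl] at h1
        exact h1 (memSk hTne le_rfl)
      · exfalso
        rw [minS' hTne le_rfl] at h1
        exact h1 (memSk hTne le_rfl)
    · have hTne : T.Nonempty := Finset.card_pos.mp (by rw [hcT]; omega)
      simp only [Sum.elim_inr, Sum.elim_inl]
      unfold bwdMapOne fwdMap
      dsimp only
      split_ifs with h1 h2
      · exfalso
        rw [minS' hTne (by norm_num)] at h1
        exact gapS hTne (by norm_num) 1 (by norm_num) (by norm_num) h1
      · exact congrArg (Sum.inr ∘ Sum.inl) (Subtype.ext (fwd_bwd hTne (by norm_num) _))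
      · exfalso
        rw [minS' hTne (by norm_num)] at h2
        exact h2 (memSk hTne (by norm_num))
    · have hTne : T.Nonempty := Finset.card_pos.mp (by rw [hcT]; omega)
      simp only [Sum.elim_inr]
      unfold bwdMapOne fwdMap
      dsimp only
      split_ifs with h1 h2
      · exfalso
        rw [minS' hTne (by norm_num)] at h1
        exact gapS hTne (by norm_num) 1 (by norm_num) (by norm_num) h1
      · exfalso
        rw [minS' hTne (by norm_num)] at h2
        exact gapS hTne (by norm_num) 2 (by norm_num) (by norm_num) h2
      · exact congrArg (Sum.inr ∘ Sum.inr) (Subtype.ext (fwd_bwd hTne (by norm_num) _))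

end EquivPart

section FinTransfer

def finDS (n i : ℕ) : Type := {S : Finset (Fin n) // IsDomSet (cycleGraph n) S ∧ S.card = i}

lemma map_attachFin {n : ℕ} (s : Finset ℕ) (h : ∀ m ∈ s, m < n) :
    (s.attachFin h).map Fin.valEmbedding = s := by
  ext x
  simp only [Finset.mem_map, Fin.valEmbedding_apply]
  constructor
  · rintro ⟨a, ha, rfl⟩
    exact (Finset.mem_attachFin h).mp ha
  · intro hx
    exact ⟨⟨x, h x hx⟩, (Finset.mem_attachFin h).mpr hx, rfl⟩

def finEquivN (n i : ℕ) : finDS (n+1) i ≃ DS (n+1) i where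
  toFun x := ⟨x.1.map Fin.valEmbedding, (domN_map x.1).mpr x.2.1,
    by rw [Finset.card_map]; exact x.2.2⟩
  invFun y := ⟨y.1.attachFin (fun m hm => Finset.mem_range.mp (y.2.1.1 hm)),
    by
      constructor
      · rw [← domN_map, map_attachFin]
        exact y.2.1
      · rw [Finset.card_attachFin]
        exact y.2.2⟩
  left_inv := by
    rintro ⟨S, hS⟩
    apply Subtype.ext
    dsimp only
    ext a
    rw [Finset.mem_attachFin]
    simp only [Finset.mem_map, Fin.valEmbedding_apply]
    constructor
    · rintro ⟨u, hu, hux⟩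
      rwa [← Fin.ext_iff.mpr hux]
    · intro h
      exact ⟨a, h, rfl⟩
  right_inv := by
    rintro ⟨T, hT⟩
    apply Subtype.ext
    dsimp only
    rw [map_attachFin]

instance finDS_finite (n i : ℕ) : Finite (finDS n i) :=
  Finite.of_injective (fun x => x.1) (fun _ _ h => Subtype.ext h)

lemma card_eq (n i : ℕ) : Nat.card (finDS (n+1) i) = Nat.card (DS (n+1) i) :=
  Nat.card_congr (finEquivN n i)

end FinTransfer

section Vanishing

lemma finDS_empty_of_gt {m i : ℕ} (h : m < i) : IsEmpty (finDS m i) := by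
  constructor
  rintro ⟨S, _, hcard⟩
  have h1 : S.card ≤ m := by
    have := Finset.card_le_univ S
    simpa [Fintype.card_fin] using this
  omega

lemma finDS_empty_zero {m : ℕ} (hm : 1 ≤ m) : IsEmpty (finDS m 0) := by
  constructor
  rintro ⟨S, hS, hcard⟩
  obtain rfl : S = ∅ := Finset.card_eq_zero.mp hcard
  obtain ⟨m', rfl⟩ : ∃ m', m = m' + 1 := ⟨m - 1, by omega⟩
  rcases hS ⟨0, by omega⟩ with h | ⟨u, hu, _⟩
  · exact absurd h (Finset.notMem_empty _)
  · exact absurd hu (Finset.notMem_empty _)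

lemma noSingle {n : ℕ} {S : Finset ℕ} (hn : 4 ≤ n) (hS : DomN n S) (hcard : S.card = 1) :
    False := by
  obtain ⟨s, rfl⟩ := Finset.card_eq_one.mp hcard
  have hs : s < n := hS.mem_lt (Finset.mem_singleton_self s)
  have hmod : ∀ j, 1 ≤ j → j ≤ 3 → (s + j) % n ≠ s := by
    intro j h1 h3 heq
    rcases lt_or_ge (s + j) n with h | h
    · rw [Nat.mod_eq_of_lt h] at heq
      omega
    · rw [Nat.mod_eq_sub_mod h, Nat.mod_eq_of_lt (by omega)] at heq
      omega
  have hv : (s + 1) % n < n := Nat.mod_lt _ (by omega)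
  rcases hS.2 _ hv with h | h | h
  · exact hmod 1 (by norm_num) (by norm_num) (Finset.mem_singleton.mp h)
  · rw [Nat.mod_add_mod] at h
    exact hmod 2 (by norm_num) (by norm_num) (Finset.mem_singleton.mp (by rwa [show s+1+1 = s+2 by ring] at h))
  · rw [Nat.mod_add_mod] at h
    exact hmod 3 (by norm_num) (by norm_num) (Finset.mem_singleton.mp (by rwa [show s+1+2 = s+3 by ring] at h))

end Vanishing

section MainCount

lemma card_eq' {m : ℕ} (hm : 1 ≤ m) (i : ℕ) : Nat.card (finDS m i) = Nat.card (DS m i) := by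
  obtain ⟨m', rfl⟩ : ∃ m', m = m' + 1 := ⟨m - 1, by omega⟩
  exact card_eq m' i

lemma DS_finite' {m : ℕ} (hm : 1 ≤ m) (i : ℕ) : Finite (DS m i) := by
  obtain ⟨m', rfl⟩ : ∃ m', m = m' + 1 := ⟨m - 1, by omega⟩
  exact Finite.of_equiv _ (finEquivN m' i)

lemma main_count {n : ℕ} (hn : 4 ≤ n) (i : ℕ) :
    Nat.card (finDS n (i+1)) =
      Nat.card (finDS (n-1) i) + Nat.card (finDS (n-2) i) + Nat.card (finDS (n-3) i) := by
  rcases i with _ | j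
  · -- i = 0
    have h0 : Nat.card (finDS n 1) = 0 := by
      rw [card_eq' (by omega) 1]
      have : IsEmpty (DS n 1) := ⟨fun y => noSingle hn y.2.1 y.2.2⟩
      exact Nat.card_of_isEmpty
    rw [h0]
    have e1 : Nat.card (finDS (n-1) 0) = 0 := @Nat.card_of_isEmpty _ (finDS_empty_zero (by omega))
    have e2 : Nat.card (finDS (n-2) 0) = 0 := @Nat.card_of_isEmpty _ (finDS_empty_zero (by omega))
    have e3 : Nat.card (finDS (n-3) 0) = 0 := @Nat.card_of_isEmpty _ (finDS_empty_zero (by omega))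
    rw [e1, e2, e3]
  · -- i = j + 1
    haveI f1 : Finite (DS (n-1) (j+1)) := DS_finite' (by omega) _
    haveI f2 : Finite (DS (n-2) (j+1)) := DS_finite' (by omega) _
    haveI f3 : Finite (DS (n-3) (j+1)) := DS_finite' (by omega) _
    rw [card_eq' (by omega), card_eq' (by omega), card_eq' (by omega), card_eq' (by omega)]
    rw [Nat.card_congr (cycleEquivN n j hn), Nat.card_sum, Nat.card_sum]
    ring

end MainCount

lemma coeff_sum_smul (N d : ℕ) (c : ℕ → ℤ) :
    (∑ i ∈ Finset.range N, c i • (X : Polynomial ℤ) ^ i).coeff d =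
      if d < N then c d else 0 := by
  rw [Polynomial.finset_sum_coeff]
  simp only [Polynomial.coeff_smul, Polynomial.coeff_X_pow, smul_eq_mul, mul_ite, mul_one,
    mul_zero]
  rw [Finset.sum_ite_eq (Finset.range N) d c]
  simp [Finset.mem_range]

theorem domPoly_cycle_recurrence (n : ℕ) (hn : 4 ≤ n) :
    domPoly (cycleGraph n) =
      X * (domPoly (cycleGraph (n - 1)) + domPoly (cycleGraph (n - 2)) +
        domPoly (cycleGraph (n - 3))) := by
  have vanish : ∀ m i : ℕ, m < i → Nat.card (finDS m i) = 0 := fun m i h =>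
    @Nat.card_of_isEmpty _ (finDS_empty_of_gt h)
  unfold domPoly
  apply Polynomial.ext
  intro d
  have hcnt : ∀ m i : ℕ,
      (Nat.card {S : Finset (Fin m) // IsDomSet (cycleGraph m) S ∧ S.card = i} : ℤ) =
        (Nat.card (finDS m i) : ℤ) := fun _ _ => rfl
  simp only [Fintype.card_fin, hcnt]
  rcases d with _ | e
  · rw [Polynomial.mul_coeff_zero, Polynomial.coeff_X_zero, zero_mul, coeff_sum_smul,
      if_pos (by omega : 0 < n + 1)]
    have h0 : Nat.card (finDS n 0) = 0 := @Nat.card_of_isEmpty _ (finDS_empty_zero (by omega))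
    exact_mod_cast h0
  · rw [Polynomial.coeff_X_mul, Polynomial.coeff_add, Polynomial.coeff_add,
      coeff_sum_smul, coeff_sum_smul, coeff_sum_smul, coeff_sum_smul]
    have L : (if e + 1 < n + 1 then ((Nat.card (finDS n (e+1)) : ℤ)) else 0) =
        (Nat.card (finDS n (e+1)) : ℤ) := by
      split_ifs with h
      · rfl
      · rw [vanish n (e+1) (by omega)]
        norm_num
    have R : ∀ k : ℕ, 1 ≤ k → k ≤ 3 →
        (if e < n - k + 1 then ((Nat.card (finDS (n-k) e) : ℤ)) else 0) =
          (Nat.card (finDS (n-k) e) : ℤ) := by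
      intro k hk1 hk3
      split_ifs with h
      · rfl
      · rw [vanish (n-k) e (by omega)]
        norm_num
    rw [L, R 1 (by norm_num) (by norm_num), R 2 (by norm_num) (by norm_num),
      R 3 (by norm_num) (by norm_num)]
    exact_mod_cast main_count hn e
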